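/- Let G be a finite group, let V be a finite-dimensional complex representation of G, and let α be a linear endomorphism of V commuting with the action of G. Let τ₁, …, τ_r be pairwise non-isomorphic irreducible finite-dimensional complex representations of G such that every irreducible complex representation of G is isomorphic to some τ_i. Then det(1 − T·α | V) = Π_{i=1}^{r} det(1 − T·α | Hom_G(τ_i, V))^{dim τ_i}, where on each Hom_G(τ_i, V) the endomorphism α acts by postcomposition. -/

import Mathlib

open scoped BigOperators


open Polynomial Module LinearMap

section Aux

lemma rev_pow {R : Type*} [CommRing R] [NoZeroDivisors R] (p : R[X]) (n : ℕ) :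
    (p ^ n).reverse = p.reverse ^ n := by
  induction n with
  | zero => simp [Polynomial.reverse]
  | succ n ih => rw [pow_succ, pow_succ, Polynomial.reverse_mul_of_domain, ih]

lemma rev_prod {R : Type*} [CommRing R] [NoZeroDivisors R] {ι : Type*} (s : Finset ι)
    (q : ι → R[X]) : (∏ i ∈ s, q i).reverse = ∏ i ∈ s, (q i).reverse := by
  induction s using Finset.cons_induction with
  | empty => simp [Polynomial.reverse]
  | cons a s ha ih => rw [Finset.prod_cons, Finset.prod_cons, Polynomial.reverse_mul_of_domain, ih]

lemma charpoly_one_of_subsingleton {K M : Type*} [Field K] [AddCommGroup M] [Module K M]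
    [Subsingleton M] [Module.Finite K M] (f : M →ₗ[K] M) : f.charpoly = 1 := by
  have hm := f.charpoly_monic
  have hd : f.charpoly.natDegree = 0 := by
    rw [f.charpoly_natDegree]
    simp [Module.finrank_zero_of_subsingleton]
  have := Polynomial.eq_C_of_natDegree_eq_zero hd
  rw [this]
  have : f.charpoly.coeff 0 = 1 := by
    have := hm.leadingCoeff
    rwa [Polynomial.leadingCoeff, hd] at this
  rw [this, map_one]

universe u

lemma charpoly_pi {K : Type*} [Field K] : ∀ (n : ℕ) (M : Fin n → Type u) [∀ i, AddCommGroup (M i)]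
    [∀ i, Module K (M i)] [∀ i, FiniteDimensional K (M i)] (u : ∀ i, M i →ₗ[K] M i),
    (LinearMap.pi (fun i => u i ∘ₗ LinearMap.proj i)).charpoly = ∏ i, (u i).charpoly := by
  intro n
  induction n with
  | zero =>
    intro M _ _ _ u
    rw [Finset.prod_of_isEmpty]
    exact charpoly_one_of_subsingleton _
  | succ n ih =>
    intro M _ _ _ u
    let fwd : (∀ i, M i) →ₗ[K] M 0 × (∀ i : Fin n, M i.succ) :=
      (LinearMap.proj 0).prod (LinearMap.pi fun i => LinearMap.proj i.succ)
    let inv : (M 0 × (∀ i : Fin n, M i.succ)) →ₗ[K] (∀ i, M i) :=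
      LinearMap.pi (fun j => Fin.cases (LinearMap.fst K _ _)
        (fun i => (LinearMap.proj i) ∘ₗ LinearMap.snd K _ _) j)
    have h1 : fwd ∘ₗ inv = LinearMap.id := by
      apply LinearMap.ext; intro x
      refine Prod.ext ?_ ?_
      · simp [fwd, inv]
      · funext i; simp [fwd, inv]
    have h2 : inv ∘ₗ fwd = LinearMap.id := by
      apply LinearMap.ext; intro x
      funext j
      induction j using Fin.cases with
      | zero => simp [fwd, inv]
      | succ i => simp [fwd, inv]
    let E : (∀ i, M i) ≃ₗ[K] M 0 × (∀ i : Fin n, M i.succ) := LinearEquiv.ofLinear fwd inv h1 h2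
    have hconj : E.conj (LinearMap.pi (fun i => u i ∘ₗ LinearMap.proj i)) =
        (u 0).prodMap (LinearMap.pi (fun i => u i.succ ∘ₗ LinearMap.proj i)) := by
      apply LinearMap.ext; intro x
      refine Prod.ext ?_ ?_
      · simp [LinearEquiv.conj_apply, E, fwd, inv]
      · funext i; simp [LinearEquiv.conj_apply, E, fwd, inv]
    have := LinearEquiv.charpoly_conj E (LinearMap.pi (fun i => u i ∘ₗ LinearMap.proj i))
    rw [← this, hconj, LinearMap.charpoly_prodMap, ih _ (fun i => u i.succ),
      Fin.prod_univ_succ]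

lemma maschke_compl {G : Type*} [Group G] [Fintype G] {VV : Type*} [AddCommGroup VV]
    [Module ℂ VV] (ρ : Representation ℂ G VV) (U : Submodule ℂ VV)
    (hU : ∀ g : G, ∀ x ∈ U, ρ g x ∈ U) :
    ∃ U' : Submodule ℂ VV, (∀ g : G, ∀ x ∈ U', ρ g x ∈ U') ∧ IsCompl U U' := by
  obtain ⟨U₀, hc⟩ := Submodule.exists_isCompl U
  set q : VV →ₗ[ℂ] VV := U.subtype ∘ₗ (U.projectionOnto U₀ hc) with hq
  have hqU : ∀ x, q x ∈ U := fun x => (U.projectionOnto U₀ hc x).2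
  have hqid : ∀ x ∈ U, q x = x := by
    intro x hx
    simp [hq, Submodule.projectionOnto_apply_left hc ⟨x, hx⟩]
  set p : VV →ₗ[ℂ] VV :=
    (Fintype.card G : ℂ)⁻¹ • ∑ g : G, (ρ g) ∘ₗ q ∘ₗ (ρ g⁻¹) with hp
  have hcard : (Fintype.card G : ℂ) ≠ 0 := by
    exact_mod_cast Nat.cast_ne_zero.mpr Fintype.card_ne_zero
  have hinvρ : ∀ (g : G) (x : VV), ρ g (ρ g⁻¹ x) = x := by
    intro g x
    have : ρ g * ρ g⁻¹ = 1 := by rw [← map_mul, mul_inv_cancel, map_one]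
    calc ρ g (ρ g⁻¹ x) = (ρ g * ρ g⁻¹) x := rfl
    _ = x := by rw [this]; rfl
  have hpid : ∀ x ∈ U, p x = x := by
    intro x hx
    have : ∀ g : G, ((ρ g) ∘ₗ q ∘ₗ (ρ g⁻¹)) x = x := by
      intro g
      have h1 : ρ g⁻¹ x ∈ U := hU g⁻¹ x hx
      simp only [LinearMap.comp_apply]
      rw [hqid _ h1, hinvρ]
    simp only [hp, LinearMap.smul_apply, LinearMap.sum_apply]
    rw [Finset.sum_congr rfl (fun g _ => this g)]
    simp only [Finset.sum_const, Finset.card_univ, smul_smul]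
    rw [← Nat.cast_smul_eq_nsmul ℂ, smul_smul, inv_mul_cancel₀ hcard, one_smul]
  have hpU : ∀ x, p x ∈ U := by
    intro x
    simp only [hp, LinearMap.smul_apply, LinearMap.sum_apply]
    refine Submodule.smul_mem _ _ (Submodule.sum_mem _ fun g _ => ?_)
    simp only [LinearMap.comp_apply]
    exact hU g _ (hqU _)
  have hequiv : ∀ (h : G) (x : VV), ρ h (p x) = p (ρ h x) := by
    intro h x
    simp only [hp, LinearMap.smul_apply, LinearMap.sum_apply, map_smul, map_sum]
    congr 1
    refine Fintype.sum_equiv (Equiv.mulLeft h) _ _ ?_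
    intro g
    simp only [LinearMap.comp_apply, Equiv.coe_mulLeft]
    have h1 : ρ (h * g) (q (ρ (h * g)⁻¹ (ρ h x))) = ρ h (ρ g (q (ρ g⁻¹ x))) := by
      have : ρ (h * g)⁻¹ (ρ h x) = ρ g⁻¹ x := by
        have : (ρ (h * g)⁻¹) ∘ₗ (ρ h) = ρ g⁻¹ := by
          rw [← Module.End.mul_eq_comp, ← map_mul]; congr 1; group
        calc ρ (h * g)⁻¹ (ρ h x) = ((ρ (h * g)⁻¹) ∘ₗ (ρ h)) x := rfl
        _ = ρ g⁻¹ x := by rw [this]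
      rw [this]
      have : ρ (h * g) = (ρ h) ∘ₗ (ρ g) := by
        rw [← Module.End.mul_eq_comp, ← map_mul]
      rw [this]; rfl
    exact h1.symm
  refine ⟨LinearMap.ker p, ?_, ?_⟩
  · intro g x hx
    simp only [LinearMap.mem_ker] at hx ⊢
    rw [← hequiv, hx, map_zero]
  · constructor
    · rw [Submodule.disjoint_def]
      intro x hxU hxK
      rw [LinearMap.mem_ker] at hxK
      rw [← hpid x hxU, hxK]
    · rw [codisjoint_iff, eq_top_iff]
      intro x _
      have hx1 : p x ∈ U := hpU x
      have hx2 : x - p x ∈ LinearMap.ker p := by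
        rw [LinearMap.mem_ker, map_sub, hpid _ hx1, sub_self]
      have : x = p x + (x - p x) := by abel
      rw [this]
      exact Submodule.add_mem_sup hx1 hx2

lemma exists_min_invariant {G : Type*} [Group G] {VV : Type*} [AddCommGroup VV]
    [Module ℂ VV] [FiniteDimensional ℂ VV] (ρ : Representation ℂ G VV)
    (U : Submodule ℂ VV) (hUinv : ∀ g : G, ∀ x ∈ U, ρ g x ∈ U) (hne : U ≠ ⊥) :
    ∃ W : Submodule ℂ VV, W ≤ U ∧ W ≠ ⊥ ∧ (∀ g : G, ∀ x ∈ W, ρ g x ∈ W) ∧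
      ∀ W' : Submodule ℂ VV, W' ≤ W → (∀ g : G, ∀ x ∈ W', ρ g x ∈ W') → W' = ⊥ ∨ W' = W := by
  classical
  set P : ℕ → Prop := fun n => ∃ W : Submodule ℂ VV,
    (W ≤ U ∧ W ≠ ⊥ ∧ (∀ g : G, ∀ x ∈ W, ρ g x ∈ W)) ∧ finrank ℂ W = n with hP
  have hex : ∃ n, P n := ⟨finrank ℂ U, U, ⟨le_rfl, hne, hUinv⟩, rfl⟩
  obtain ⟨W, ⟨hWU, hWne, hWinv⟩, hWrank⟩ := Nat.find_spec hex
  refine ⟨W, hWU, hWne, hWinv, ?_⟩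
  intro W' hle hinv'
  by_cases h : W' = ⊥
  · exact Or.inl h
  · right
    have h1 : P (finrank ℂ W') := ⟨W', ⟨hle.trans hWU, h, hinv'⟩, rfl⟩
    have h2 : Nat.find hex ≤ finrank ℂ W' := Nat.find_min' hex h1
    have h3 : finrank ℂ W' ≤ finrank ℂ W := Submodule.finrank_mono hle
    exact Submodule.eq_of_le_of_finrank_eq hle (le_antisymm h3 (hWrank ▸ h2))

lemma embed_irreducible {G : Type*} [Group G] {VV : Type*} [AddCommGroup VV]
    [Module ℂ VV] [FiniteDimensional ℂ VV] (ρ : Representation ℂ G VV)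
    {r : ℕ} (Vτ : Fin r → Type)
    [∀ i, AddCommGroup (Vτ i)] [∀ i, Module ℂ (Vτ i)] [∀ i, FiniteDimensional ℂ (Vτ i)]
    (τ : ∀ i, Representation ℂ G (Vτ i))
    (hcomplete : ∀ (W : Type) [AddCommGroup W] [Module ℂ W] [FiniteDimensional ℂ W]
      (π : Representation ℂ G W),
      (Nontrivial W ∧
        ∀ U : Submodule ℂ W, (∀ g : G, ∀ x ∈ U, π g x ∈ U) → U = ⊥ ∨ U = ⊤) →
      ∃ i, ∃ e : W ≃ₗ[ℂ] Vτ i, ∀ (g : G) (v : W), e (π g v) = τ i g (e v))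
    (W : Submodule ℂ VV) (hWinv : ∀ g : G, ∀ x ∈ W, ρ g x ∈ W) (hWne : W ≠ ⊥)
    (hWmin : ∀ W' : Submodule ℂ VV, W' ≤ W → (∀ g : G, ∀ x ∈ W', ρ g x ∈ W') →
      W' = ⊥ ∨ W' = W) :
    ∃ (i : Fin r) (j : Vτ i →ₗ[ℂ] VV), Function.Injective j ∧ LinearMap.range j = W ∧
      ∀ g : G, j ∘ₗ τ i g = ρ g ∘ₗ j := by
  classical
  -- the representation on the subtype
  set π : Representation ℂ G W :=
    { toFun := fun g => (ρ g).restrict (fun x hx => hWinv g x hx)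
      map_one' := by
        ext x
        simp [LinearMap.restrict_apply]
      map_mul' := by
        intro g h
        ext x
        simp [LinearMap.restrict_apply, Module.End.mul_eq_comp] } with hπ
  have hπ_apply : ∀ (g : G) (w : W), (↑(π g w) : VV) = ρ g ↑w := by
    intro g w
    simp [hπ, LinearMap.restrict_apply]
  -- shrink to a Type-0 copy
  set n₀ := finrank ℂ W with hn₀
  set bW : Basis (Fin n₀) ℂ W := Module.finBasis ℂ W with hbW
  set ε : W ≃ₗ[ℂ] (Fin n₀ → ℂ) := bW.equivFun with hε
  set π' : Representation ℂ G (Fin n₀ → ℂ) :=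
    { toFun := fun g => ε.conj (π g)
      map_one' := by
        ext x
        simp [LinearEquiv.conj_apply]
      map_mul' := by
        intro g h
        simp [Module.End.mul_eq_comp, LinearEquiv.conj_comp] } with hπ'
  have hπ'_apply : ∀ (g : G) (y : Fin n₀ → ℂ), ε.symm (π' g y) = π g (ε.symm y) := by
    intro g y
    simp [hπ', LinearEquiv.conj_apply]
  have hWnontriv : Nontrivial W := Submodule.nontrivial_iff_ne_bot.mpr hWne
  have hnontriv : Nontrivial (Fin n₀ → ℂ) := ε.symm.toEquiv.nontrivial
  -- the inclusion Fin n₀ → ℂ into VV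
  set ι : (Fin n₀ → ℂ) →ₗ[ℂ] VV := W.subtype ∘ₗ (ε.symm : (Fin n₀ → ℂ) ≃ₗ[ℂ] W).toLinearMap
    with hι
  have hιinj : Function.Injective ι := by
    simp only [hι, LinearMap.coe_comp, LinearEquiv.coe_coe]
    exact W.injective_subtype.comp ε.symm.injective
  -- irreducibility of π'
  have hirr' : ∀ U' : Submodule ℂ (Fin n₀ → ℂ), (∀ g : G, ∀ x ∈ U', π' g x ∈ U') →
      U' = ⊥ ∨ U' = ⊤ := by
    intro U' hU'
    set U'' := Submodule.map ι U' with hU''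
    have hle : U'' ≤ W := by
      rintro x ⟨y, hy, rfl⟩
      exact (ε.symm y).2
    have hinv'' : ∀ g : G, ∀ x ∈ U'', ρ g x ∈ U'' := by
      rintro g x ⟨y, hy, rfl⟩
      refine ⟨π' g y, hU' g y hy, ?_⟩
      simp only [hι, LinearMap.coe_comp, LinearEquiv.coe_coe, Function.comp_apply,
        Submodule.coe_subtype]
      rw [hπ'_apply, hπ_apply]
    rcases hWmin U'' hle hinv'' with h | h
    · left
      apply Submodule.map_injective_of_injective hιinj
      rw [Submodule.map_bot]
      exact h
    · right
      rw [eq_top_iff]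
      intro z _
      have hz : ι z ∈ U'' := by
        rw [h]
        simp only [hι, LinearMap.coe_comp, LinearEquiv.coe_coe, Function.comp_apply,
          Submodule.coe_subtype]
        exact (ε.symm z).2
      obtain ⟨y, hy, hyz⟩ := hz
      rwa [← hιinj hyz]
  obtain ⟨i, e'', he''⟩ := hcomplete (Fin n₀ → ℂ) π' ⟨hnontriv, hirr'⟩
  refine ⟨i, ι ∘ₗ e''.symm.toLinearMap, ?_, ?_, ?_⟩
  · exact hιinj.comp e''.symm.injective
  · rw [LinearMap.range_comp, LinearEquiv.range, Submodule.map_top, hι, LinearMap.range_comp,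
      LinearEquiv.range, Submodule.map_top, Submodule.range_subtype]
  · intro g
    apply LinearMap.ext
    intro v
    have h1 : π' g (e''.symm v) = e''.symm (τ i g v) := by
      apply e''.injective
      rw [he'', e''.apply_symm_apply, e''.apply_symm_apply]
    simp only [LinearMap.coe_comp, LinearEquiv.coe_coe, Function.comp_apply]
    rw [← h1]
    simp only [hι, LinearMap.coe_comp, LinearEquiv.coe_coe, Function.comp_apply,
      Submodule.coe_subtype]
    rw [hπ'_apply, hπ_apply]

lemma dec_rep {G : Type*} [Group G] [Fintype G] {VV : Type*} [AddCommGroup VV] [Module ℂ VV]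
    [FiniteDimensional ℂ VV] (ρ : Representation ℂ G VV) {r : ℕ} (Vτ : Fin r → Type)
    [∀ i, AddCommGroup (Vτ i)] [∀ i, Module ℂ (Vτ i)] [∀ i, FiniteDimensional ℂ (Vτ i)]
    (τ : ∀ i, Representation ℂ G (Vτ i))
    (hcomplete : ∀ (W : Type) [AddCommGroup W] [Module ℂ W] [FiniteDimensional ℂ W]
      (π : Representation ℂ G W),
      (Nontrivial W ∧
        ∀ U : Submodule ℂ W, (∀ g : G, ∀ x ∈ U, π g x ∈ U) → U = ⊥ ∨ U = ⊤) →
      ∃ i, ∃ e : W ≃ₗ[ℂ] Vτ i, ∀ (g : G) (v : W), e (π g v) = τ i g (e v)) :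
    ∀ (n : ℕ) (U : Submodule ℂ VV), finrank ℂ U = n → (∀ g : G, ∀ x ∈ U, ρ g x ∈ U) →
    ∃ (N : ℕ) (c : Fin N → Fin r) (Ψ : (∀ k, Vτ (c k)) →ₗ[ℂ] VV),
      Function.Injective Ψ ∧ LinearMap.range Ψ = U ∧
      ∀ (g : G) (x : ∀ k, Vτ (c k)), Ψ (fun k => τ (c k) g (x k)) = ρ g (Ψ x) := by
  intro n
  induction n using Nat.strong_induction_on with
  | _ n ih =>
  intro U hrank hinv
  by_cases hbot : U = ⊥
  · refine ⟨0, Fin.elim0, 0, ?_, ?_, ?_⟩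
    · intro a b _
      exact Subsingleton.elim a b
    · rw [LinearMap.range_zero, hbot]
    · intro g x
      simp
  · obtain ⟨W, hWU, hWne, hWinv, hWmin⟩ := exists_min_invariant ρ U hinv hbot
    obtain ⟨i, j, hjinj, hjrange, hjequiv⟩ :=
      embed_irreducible ρ Vτ τ hcomplete W hWinv hWne hWmin
    obtain ⟨C, hCinv, hCcompl⟩ := maschke_compl ρ W hWinv
    set U'' : Submodule ℂ VV := U ⊓ C with hU''
    have hU''inv : ∀ g : G, ∀ x ∈ U'', ρ g x ∈ U'' := by
      rintro g x ⟨hx1, hx2⟩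
      exact ⟨hinv g x hx1, hCinv g x hx2⟩
    have hdisj : W ⊓ U'' = ⊥ := by
      rw [← le_bot_iff]
      calc W ⊓ U'' ≤ W ⊓ C := inf_le_inf_left W inf_le_right
      _ = ⊥ := disjoint_iff.mp hCcompl.disjoint
    have hsup : W ⊔ U'' = U := by
      have h1 : (W ⊔ C) ⊓ U = W ⊔ (C ⊓ U) := sup_inf_assoc_of_le C hWU
      rw [codisjoint_iff.mp hCcompl.codisjoint, top_inf_eq, inf_comm C U] at h1
      exact h1.symm
    have hfr : finrank ℂ W + finrank ℂ U'' = n := by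
      have := Submodule.finrank_sup_add_finrank_inf_eq W U''
      rw [hsup, hdisj, finrank_bot, add_zero, hrank] at this
      exact this.symm
    have hWpos : 0 < finrank ℂ W := by
      rcases Nat.eq_zero_or_pos (finrank ℂ W) with h | h
      · exact absurd (Submodule.finrank_eq_zero.mp h) hWne
      · exact h
    have hlt : finrank ℂ U'' < n := by omega
    obtain ⟨N, c, Ψ'', hinj'', hrange'', hequiv''⟩ := ih _ hlt U'' rfl hU''inv
    set c' : Fin (N + 1) → Fin r := Fin.cases i c with hc'
    set Ψ' : (∀ k, Vτ (c' k)) →ₗ[ℂ] VV :=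
      j ∘ₗ (LinearMap.proj 0) + Ψ'' ∘ₗ (LinearMap.pi fun k : Fin N => LinearMap.proj k.succ)
      with hΨ'
    have hΨ'apply : ∀ x, Ψ' x = j (x 0) + Ψ'' (fun k => x k.succ) := by
      intro x
      rfl
    refine ⟨N + 1, c', Ψ', ?_, ?_, ?_⟩
    · rw [← LinearMap.ker_eq_bot, eq_bot_iff]
      intro x hx
      rw [LinearMap.mem_ker, hΨ'apply] at hx
      have h0 : j (x 0) ∈ W ⊓ U'' := by
        constructor
        · rw [← hjrange]; exact ⟨x 0, rfl⟩
        · have : j (x 0) = - Ψ'' (fun k => x k.succ) := by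
            rw [eq_neg_iff_add_eq_zero]; exact hx
          rw [this]
          exact Submodule.neg_mem _ (hrange'' ▸ ⟨_, rfl⟩)
      rw [hdisj] at h0
      have hx0 : x 0 = 0 := by
        apply hjinj
        refine Eq.trans ?_ (map_zero j).symm
        exact h0
      have htail : (fun k : Fin N => x k.succ) = 0 := by
        apply hinj''
        refine Eq.trans ?_ (map_zero Ψ'').symm
        have := hx
        rw [show j (x 0) = 0 from h0, zero_add] at this
        exact this
      have hmz : ∀ k : Fin (N + 1), x k = 0 := by
        refine Fin.cases hx0 ?_
        intro k
        exact congrFun htail k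
      simp only [Submodule.mem_bot]
      funext k
      exact hmz k
    · apply le_antisymm
      · rintro v ⟨x, rfl⟩
        rw [hΨ'apply]
        apply Submodule.add_mem
        · exact hWU (hjrange ▸ ⟨x 0, rfl⟩)
        · have : Ψ'' (fun k => x k.succ) ∈ U'' := hrange'' ▸ ⟨_, rfl⟩
          exact this.1
      · intro v hv
        rw [← hsup] at hv
        obtain ⟨w, hw, u, hu, rfl⟩ := Submodule.mem_sup.mp hv
        rw [← hjrange] at hw
        obtain ⟨a, rfl⟩ := hw
        rw [← hrange''] at hu
        obtain ⟨y, rfl⟩ := hu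
        refine ⟨Fin.cases a y, ?_⟩
        rw [hΨ'apply]
        rfl
    · intro g x
      rw [hΨ'apply, hΨ'apply]
      have h1 : j (τ (c' 0) g (x 0)) = ρ g (j (x 0)) := LinearMap.congr_fun (hjequiv g) (x 0)
      have h2 : Ψ'' (fun k => τ (c' k.succ) g (x k.succ)) = ρ g (Ψ'' (fun k => x k.succ)) :=
        hequiv'' g (fun k => x k.succ)
      rw [map_add, ← h1, ← h2]

end Aux

set_option maxHeartbeats 1600000 in
set_option synthInstance.maxHeartbeats 400000 in
/-- Let `G` be a finite group, `V` a finite-dimensional complex representation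
of `G`, and `α` an endomorphism of `V` commuting with the `G`-action. Let `τ₁, …, τ_r` be
pairwise non-isomorphic irreducible finite-dimensional complex representations of `G` such that
every irreducible complex representation of `G` is isomorphic to some `τ_i`. Then
`det(1 − T·α | V) = ∏ᵢ det(1 − T·α | Hom_G(τᵢ, V))^{dim τᵢ}`, where `det(1 − T·β | W)` is the
reverse characteristic polynomial of `β` and `α` acts on each `Hom_G(τᵢ, V)` by
postcomposition. -/
theorem reverse_charpoly_eq_prod_pieces {G : Type*} [Group G] [Fintype G]
    {VV : Type*} [AddCommGroup VV] [Module ℂ VV] [FiniteDimensional ℂ VV]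
    (ρ : Representation ℂ G VV)
    (α : VV →ₗ[ℂ] VV) (hα : ∀ g : G, α ∘ₗ ρ g = ρ g ∘ₗ α)
    (r : ℕ) (Vτ : Fin r → Type)
    [∀ i, AddCommGroup (Vτ i)] [∀ i, Module ℂ (Vτ i)] [∀ i, FiniteDimensional ℂ (Vτ i)]
    (τ : ∀ i, Representation ℂ G (Vτ i))
    -- each `τ i` is irreducible
    (hirr : ∀ i, Nontrivial (Vτ i) ∧
      ∀ U : Submodule ℂ (Vτ i), (∀ g : G, ∀ x ∈ U, τ i g x ∈ U) → U = ⊥ ∨ U = ⊤)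
    -- the `τ i` are pairwise non-isomorphic
    (hdistinct : ∀ i j, i ≠ j →
      ¬ ∃ e : Vτ i ≃ₗ[ℂ] Vτ j, ∀ (g : G) (v : Vτ i), e (τ i g v) = τ j g (e v))
    -- every irreducible complex representation of `G` is isomorphic to some `τ i`
    (hcomplete : ∀ (W : Type) [AddCommGroup W] [Module ℂ W] [FiniteDimensional ℂ W]
      (π : Representation ℂ G W),
      (Nontrivial W ∧
        ∀ U : Submodule ℂ W, (∀ g : G, ∀ x ∈ U, π g x ∈ U) → U = ⊥ ∨ U = ⊤) →
      ∃ i, ∃ e : W ≃ₗ[ℂ] Vτ i, ∀ (g : G) (v : W), e (π g v) = τ i g (e v))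
    -- `S i = Hom_G(τ i, V)` with the postcomposition action `A i` of `α`
    (S : ∀ i, Submodule ℂ (Vτ i →ₗ[ℂ] VV))
    (hS : ∀ i (f : Vτ i →ₗ[ℂ] VV), f ∈ S i ↔ ∀ g : G, f ∘ₗ τ i g = ρ g ∘ₗ f)
    (A : ∀ i, S i →ₗ[ℂ] S i)
    (hA : ∀ i (f : S i), (A i f : Vτ i →ₗ[ℂ] VV) = α ∘ₗ (f : Vτ i →ₗ[ℂ] VV)) :
    (LinearMap.charpoly α).reverse =
      ∏ i, ((LinearMap.charpoly (A i)).reverse) ^ (Module.finrank ℂ (Vτ i)) := by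
  classical
  -- abbreviations
  set d : Fin r → ℕ := fun i => Module.finrank ℂ (Vτ i) with hd
  set b : ∀ i, Basis (Fin (d i)) ℂ (Vτ i) := fun i => Module.finBasis ℂ (Vτ i) with hb
  -- spaces of equivariant maps between the irreducibles
  set T : ∀ i j : Fin r, Submodule ℂ (Vτ i →ₗ[ℂ] Vτ j) := fun i j =>
    { carrier := {f | ∀ g : G, f ∘ₗ τ i g = τ j g ∘ₗ f}
      add_mem' := fun {f₁ f₂} h₁ h₂ g => by
        rw [LinearMap.add_comp, LinearMap.comp_add, h₁ g, h₂ g]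
      zero_mem' := fun g => by rw [LinearMap.zero_comp, LinearMap.comp_zero]
      smul_mem' := fun cc {f} hf g => by
        rw [LinearMap.smul_comp, LinearMap.comp_smul, hf g] } with hTdef
  have hTmem : ∀ i j (f : Vτ i →ₗ[ℂ] Vτ j), f ∈ T i j ↔ ∀ g : G, f ∘ₗ τ i g = τ j g ∘ₗ f := by
    intro i j f
    rfl
  -- Schur's lemma, scalar form
  have hschur : ∀ i, ∀ f ∈ T i i, ∃ cc : ℂ, f = cc • LinearMap.id := by
    intro i f hf
    have hnt := (hirr i).1
    obtain ⟨cc, hcc⟩ := Module.End.exists_eigenvalue (f : Module.End ℂ (Vτ i))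
    have hne : Module.End.eigenspace f cc ≠ ⊥ := hcc
    have hinv : ∀ g : G, ∀ x ∈ Module.End.eigenspace f cc,
        τ i g x ∈ Module.End.eigenspace f cc := by
      intro g x hx
      rw [Module.End.mem_eigenspace_iff] at hx ⊢
      have h1 := LinearMap.congr_fun ((hTmem i i f).mp hf g) x
      simp only [LinearMap.comp_apply] at h1
      rw [h1, hx, map_smul]
    rcases (hirr i).2 _ hinv with h | h
    · exact absurd h hne
    · refine ⟨cc, ?_⟩
      ext x
      have hx : x ∈ Module.End.eigenspace f cc := h ▸ Submodule.mem_top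
      rw [Module.End.mem_eigenspace_iff] at hx
      simpa using hx
  -- dimension of the hom spaces
  have hTdim : ∀ i j : Fin r, Module.finrank ℂ (T i j) = if i = j then 1 else 0 := by
    intro i j
    by_cases hij : i = j
    · subst hij
      rw [if_pos rfl]
      have hTii : T i i = Submodule.span ℂ {(LinearMap.id : Vτ i →ₗ[ℂ] Vτ i)} := by
        apply le_antisymm
        · intro f hf
          obtain ⟨cc, rfl⟩ := hschur i f hf
          exact Submodule.smul_mem _ cc (Submodule.mem_span_singleton_self _)
        · rw [Submodule.span_le, Set.singleton_subset_iff]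
          intro g
          rw [LinearMap.id_comp, LinearMap.comp_id]
      rw [hTii]
      apply finrank_span_singleton
      have hnt := (hirr i).1
      obtain ⟨v₀, hv₀⟩ := exists_ne (0 : Vτ i)
      intro h0
      apply hv₀
      have := LinearMap.congr_fun h0 v₀
      simpa using this
    · rw [if_neg hij]
      have hbotT : T i j = ⊥ := by
        rw [eq_bot_iff]
        intro f hf
        have hfe := (hTmem i j f).mp hf
        have hkinv : ∀ g : G, ∀ x ∈ LinearMap.ker f, τ i g x ∈ LinearMap.ker f := by
          intro g x hx
          rw [LinearMap.mem_ker] at hx ⊢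
          have h1 := LinearMap.congr_fun (hfe g) x
          simp only [LinearMap.comp_apply] at h1
          rw [h1, hx, map_zero]
        rcases (hirr i).2 _ hkinv with h | h
        · have hrinv : ∀ g : G, ∀ y ∈ LinearMap.range f, τ j g y ∈ LinearMap.range f := by
            rintro g y ⟨x, rfl⟩
            refine ⟨τ i g x, ?_⟩
            have h1 := LinearMap.congr_fun (hfe g) x
            simpa using h1
          rcases (hirr j).2 _ hrinv with h2 | h2
          · have : f = 0 := LinearMap.range_eq_bot.mp h2
            simp [this]
          · exfalso
            have hbij : Function.Bijective f :=
              ⟨LinearMap.ker_eq_bot.mp h, LinearMap.range_eq_top.mp h2⟩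
            refine hdistinct i j hij ⟨LinearEquiv.ofBijective f hbij, ?_⟩
            intro g v
            have h1 := LinearMap.congr_fun (hfe g) v
            simpa using h1
        · have : f = 0 := LinearMap.ker_eq_top.mp h
          simp [this]
      rw [hbotT]
      exact finrank_bot ℂ _
  -- decompose VV into irreducibles
  obtain ⟨N, c, Ψ, hΨinj, hΨrange, hΨequiv⟩ :=
    dec_rep ρ Vτ τ hcomplete (finrank ℂ (⊤ : Submodule ℂ VV)) ⊤ rfl
      (fun g x _ => Submodule.mem_top)
  have hΨsurj : Function.Surjective Ψ := LinearMap.range_eq_top.mp hΨrange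
  set E : (∀ k, Vτ (c k)) ≃ₗ[ℂ] VV := LinearEquiv.ofBijective Ψ ⟨hΨinj, hΨsurj⟩ with hE
  have hEapp : ∀ x, E x = Ψ x := fun _ => rfl
  have hEsymm : ∀ (g : G) (v : VV),
      E.symm (ρ g v) = fun k => τ (c k) g (E.symm v k) := by
    intro g v
    apply E.injective
    rw [E.apply_symm_apply, hEapp, hΨequiv]
    show ρ g v = ρ g (Ψ (E.symm v))
    rw [← hEapp, E.apply_symm_apply]
  -- finrank of hom spaces S i via the decomposition
  have hmi : ∀ i, Module.finrank ℂ (S i) = ∑ k, if i = c k then 1 else 0 := by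
    intro i
    -- the equivalence S i ≃ₗ ∀ k, T i (c k)
    set fwdL : (S i) →ₗ[ℂ] (∀ k, T i (c k)) :=
      { toFun := fun f => fun k =>
          ⟨LinearMap.proj k ∘ₗ (E.symm.toLinearMap) ∘ₗ (f : Vτ i →ₗ[ℂ] VV), by
            rw [hTmem]
            intro g
            apply LinearMap.ext
            intro v
            simp only [LinearMap.comp_apply, LinearEquiv.coe_coe]
            have h1 : (f : Vτ i →ₗ[ℂ] VV) (τ i g v) = ρ g ((f : Vτ i →ₗ[ℂ] VV) v) := by
              have := LinearMap.congr_fun (((hS i (f : Vτ i →ₗ[ℂ] VV)).mp f.2) g) v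
              simpa using this
            rw [h1, hEsymm]
            rfl⟩
        map_add' := by
          intro f₁ f₂
          funext k
          apply Subtype.ext
          simp [LinearMap.comp_add]
        map_smul' := by
          intro cc f
          funext k
          apply Subtype.ext
          simp [LinearMap.comp_smul] } with hfwdL
    set invL : (∀ k, T i (c k)) →ₗ[ℂ] (S i) :=
      { toFun := fun h =>
          ⟨Ψ ∘ₗ LinearMap.pi (fun k => ((h k : Vτ i →ₗ[ℂ] Vτ (c k)))), by
            rw [hS]
            intro g
            apply LinearMap.ext
            intro v
            show Ψ (fun k => (h k : Vτ i →ₗ[ℂ] Vτ (c k)) (τ i g v))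
              = ρ g (Ψ (fun k => (h k : Vτ i →ₗ[ℂ] Vτ (c k)) v))
            have h1 : ∀ k, (h k : Vτ i →ₗ[ℂ] Vτ (c k)) (τ i g v)
                = τ (c k) g ((h k : Vτ i →ₗ[ℂ] Vτ (c k)) v) := by
              intro k
              have := LinearMap.congr_fun (((hTmem i (c k) _).mp (h k).2) g) v
              simpa using this
            have h2 : (fun k => (h k : Vτ i →ₗ[ℂ] Vτ (c k)) (τ i g v))
                = fun k => τ (c k) g ((h k : Vτ i →ₗ[ℂ] Vτ (c k)) v) := funext h1
            rw [h2, hΨequiv]⟩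
        map_add' := by
          intro h₁ h₂
          apply Subtype.ext
          apply LinearMap.ext
          intro v
          simp only [Submodule.coe_add, LinearMap.add_apply, LinearMap.comp_apply,
            LinearMap.pi_apply, Pi.add_apply]
          rw [← map_add]
          rfl
        map_smul' := by
          intro cc h
          apply Subtype.ext
          apply LinearMap.ext
          intro v
          simp only [Submodule.coe_smul, LinearMap.smul_apply, LinearMap.comp_apply,
            LinearMap.pi_apply, Pi.smul_apply, RingHom.id_apply]
          rw [← map_smul]
          rfl } with hinvL
    have hcomp1 : fwdL ∘ₗ invL = LinearMap.id := by
      apply LinearMap.ext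
      intro h
      funext k
      apply Subtype.ext
      apply LinearMap.ext
      intro v
      show LinearMap.proj (R := ℂ) (φ := fun k' => Vτ (c k')) k
          (E.symm (Ψ (fun k' => (h k' : Vτ i →ₗ[ℂ] Vτ (c k')) v)))
        = ((h k : Vτ i →ₗ[ℂ] Vτ (c k)) v)
      rw [← hEapp, E.symm_apply_apply]
      rfl
    have hcomp2 : invL ∘ₗ fwdL = LinearMap.id := by
      apply LinearMap.ext
      intro f
      apply Subtype.ext
      apply LinearMap.ext
      intro v
      show Ψ (fun k => LinearMap.proj (R := ℂ) (φ := fun k => Vτ (c k)) k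
        (E.symm ((f : Vτ i →ₗ[ℂ] VV) v))) = (f : Vτ i →ₗ[ℂ] VV) v
      have : (fun k => LinearMap.proj (R := ℂ) (φ := fun k => Vτ (c k)) k
          (E.symm ((f : Vτ i →ₗ[ℂ] VV) v))) = E.symm ((f : Vτ i →ₗ[ℂ] VV) v) := rfl
      rw [this, ← hEapp, E.apply_symm_apply]
    have hequiv : Module.finrank ℂ (S i) = Module.finrank ℂ (∀ k, T i (c k)) :=
      (LinearEquiv.ofLinear fwdL invL hcomp1 hcomp2).finrank_eq
    rw [hequiv, Module.finrank_pi_fintype]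
    exact Finset.sum_congr rfl fun k _ => hTdim i (c k)
  -- the big space D and the endomorphism B
  set D := ∀ i, Fin (d i) → (S i) with hD
  set B : D →ₗ[ℂ] D := LinearMap.pi (fun i =>
    (LinearMap.pi fun j : Fin (d i) => A i ∘ₗ LinearMap.proj j) ∘ₗ LinearMap.proj i) with hB
  have hchB : B.charpoly = ∏ i, (A i).charpoly ^ (d i) := by
    rw [hB, charpoly_pi]
    refine Finset.prod_congr rfl fun i _ => ?_
    rw [charpoly_pi]
    rw [Finset.prod_const, Finset.card_univ, Fintype.card_fin]
  -- the evaluation map Φ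
  set Φ : D →ₗ[ℂ] VV :=
    { toFun := fun x => ∑ i, ∑ j, ((x i j : Vτ i →ₗ[ℂ] VV) (b i j))
      map_add' := by
        intro x y
        show (∑ i, ∑ j, ((x i j : Vτ i →ₗ[ℂ] VV) (b i j) + (y i j : Vτ i →ₗ[ℂ] VV) (b i j)))
          = _
        rw [show (∑ i, ∑ j, ((x i j : Vτ i →ₗ[ℂ] VV) (b i j) + (y i j : Vτ i →ₗ[ℂ] VV) (b i j)))
            = ∑ i, ((∑ j, (x i j : Vτ i →ₗ[ℂ] VV) (b i j))
              + ∑ j, (y i j : Vτ i →ₗ[ℂ] VV) (b i j))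
          from Finset.sum_congr rfl fun i _ => Finset.sum_add_distrib, Finset.sum_add_distrib]
      map_smul' := by
        intro cc x
        show (∑ i, ∑ j, cc • ((x i j : Vτ i →ₗ[ℂ] VV) (b i j)))
          = (RingHom.id ℂ) cc • ∑ i, ∑ j, ((x i j : Vτ i →ₗ[ℂ] VV) (b i j))
        rw [Finset.smul_sum]
        exact Finset.sum_congr rfl fun i _ => (Finset.smul_sum).symm } with hΦ
  have hΦapply : ∀ x : D, Φ x = ∑ i, ∑ j, ((x i j : Vτ i →ₗ[ℂ] VV) (b i j)) := fun _ => rfl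
  have hΦB : ∀ x : D, Φ (B x) = α (Φ x) := by
    intro x
    have h1 : Φ (B x) = ∑ i, ∑ j, (α ∘ₗ ((x i j : Vτ i →ₗ[ℂ] VV))) (b i j) := by
      show ∑ i, ∑ j, ((A i (x i j) : Vτ i →ₗ[ℂ] VV)) (b i j) = _
      exact Finset.sum_congr rfl fun i _ => Finset.sum_congr rfl fun j _ => by rw [hA]
    rw [h1, hΦapply, map_sum]
    exact Finset.sum_congr rfl fun i _ => by rw [map_sum]; rfl
  -- every value of an equivariant map lies in the range of Φ
  have hmem : ∀ (i : Fin r) (f : S i) (w : Vτ i),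
      (f : Vτ i →ₗ[ℂ] VV) w ∈ LinearMap.range Φ := by
    intro i f w
    refine ⟨Pi.single i (fun j => ((b i).repr w j) • f), ?_⟩
    rw [hΦapply]
    rw [Finset.sum_eq_single i]
    · simp only [Pi.single_eq_same]
      have : ∀ j, (((((b i).repr w j) • f : S i)) : Vτ i →ₗ[ℂ] VV) (b i j)
          = ((b i).repr w j) • ((f : Vτ i →ₗ[ℂ] VV) (b i j)) := by
        intro j
        simp
      rw [Finset.sum_congr rfl fun j _ => this j]
      rw [← Finset.sum_congr rfl fun j _ => map_smul (f : Vτ i →ₗ[ℂ] VV) _ _]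
      rw [← map_sum]
      rw [Basis.sum_repr]
    · intro i' _ hne
      rw [Pi.single_eq_of_ne hne]
      simp
    · intro h
      exact absurd (Finset.mem_univ i) h
  -- surjectivity of Φ
  have hsurj : LinearMap.range Φ = ⊤ := by
    rw [eq_top_iff]
    rintro v -
    have hψmem : ∀ k : Fin N,
        (Ψ ∘ₗ LinearMap.single ℂ (fun k' => Vτ (c k')) k) ∈ S (c k) := by
      intro k
      rw [hS]
      intro g
      apply LinearMap.ext
      intro v'
      simp only [LinearMap.comp_apply, LinearMap.coe_single]
      have hsingle : Pi.single (M := fun k' => Vτ (c k')) k (τ (c k) g v')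
          = fun k' => τ (c k') g (Pi.single (M := fun k' => Vτ (c k')) k v' k') := by
        funext k'
        by_cases h : k' = k
        · subst h
          simp
        · rw [Pi.single_eq_of_ne h, Pi.single_eq_of_ne h, map_zero]
      rw [hsingle, hΨequiv]
    have hv : v = ∑ k, Ψ (Pi.single k (E.symm v k)) := by
      have h2 : ∑ k, Ψ (Pi.single k (E.symm v k)) = Ψ (E.symm v) := by
        rw [← map_sum, Finset.univ_sum_single]
      rw [h2, ← hEapp, E.apply_symm_apply]
    rw [hv]
    refine Submodule.sum_mem _ fun k _ => ?_
    have := hmem (c k) ⟨_, hψmem k⟩ (E.symm v k)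
    simpa [LinearMap.coe_single] using this
  -- dimension count
  have hdim : finrank ℂ D = finrank ℂ VV := by
    have h1 : finrank ℂ VV = ∑ k, d (c k) := by
      rw [← E.finrank_eq, Module.finrank_pi_fintype]
    have h2 : finrank ℂ D = ∑ i, ∑ _j : Fin (d i), Module.finrank ℂ (S i) := by
      show finrank ℂ (∀ i, Fin (d i) → (S i)) = _
      rw [Module.finrank_pi_fintype]
      exact Finset.sum_congr rfl fun i _ => by rw [Module.finrank_pi_fintype]
    have h3 : ∀ i, ∑ _j : Fin (d i), Module.finrank ℂ (S i)
        = ∑ k, if i = c k then d i else 0 := by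
      intro i
      simp only [Finset.sum_const, Finset.card_univ, Fintype.card_fin, smul_eq_mul]
      simp only [hmi i, Finset.mul_sum]
      exact Finset.sum_congr rfl fun k _ => by
        by_cases h : i = c k <;> simp [h]
    have h5 : (∑ i, ∑ _j : Fin (d i), Module.finrank ℂ (S i)) = ∑ k, d (c k) := by
      rw [Finset.sum_congr rfl fun i _ => h3 i]
      rw [Finset.sum_comm]
      refine Finset.sum_congr rfl fun k _ => ?_
      have h4 : ∀ i : Fin r, (if i = c k then d i else 0) = if i = c k then d (c k) else 0 := by
        intro i
        by_cases h : i = c k <;> simp [h]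
      rw [Finset.sum_congr rfl fun i _ => h4 i, Finset.sum_ite_eq' Finset.univ (c k)
        (fun _ => d (c k))]
      simp
    calc finrank ℂ D = ∑ i, ∑ _j : Fin (d i), Module.finrank ℂ (S i) := h2
      _ = ∑ k, d (c k) := h5
      _ = finrank ℂ VV := h1.symm
  -- injectivity of Φ
  have hker : LinearMap.ker Φ = ⊥ := by
    have h1 := LinearMap.finrank_range_add_finrank_ker Φ
    rw [hsurj, finrank_top] at h1
    have h2 : finrank ℂ (LinearMap.ker Φ) = 0 := by omega
    exact Submodule.finrank_eq_zero.mp h2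
  set E2 : D ≃ₗ[ℂ] VV :=
    LinearEquiv.ofBijective Φ ⟨LinearMap.ker_eq_bot.mp hker, LinearMap.range_eq_top.mp hsurj⟩
    with hE2
  have hconj : E2.conj B = α := by
    apply LinearMap.ext
    intro v
    rw [LinearEquiv.conj_apply]
    simp only [LinearMap.comp_apply, LinearEquiv.coe_coe]
    show Φ (B (E2.symm v)) = α v
    rw [hΦB]
    have : Φ (E2.symm v) = v := by
      show E2 (E2.symm v) = v
      exact E2.apply_symm_apply v
    rw [this]
  have hch : α.charpoly = ∏ i, (A i).charpoly ^ (d i) := by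
    rw [← hchB, ← LinearEquiv.charpoly_conj E2 B, hconj]
  rw [hch, rev_prod]
  exact Finset.prod_congr rfl fun i _ => by rw [rev_pow]
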